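/- The portfolio valuation function v is a nondecreasing submodular set function: for all X, Y ⊆ C, v(X) + v(Y) ≥ v(X ∪ Y) + v(X ∩ Y), and X ⊆ Y implies v(X) ≤ v(Y). -/

import Mathlib

noncomputable def val (f t : ℕ → ℝ) (X : Finset ℕ) : ℝ :=
  ∑ j ∈ X, f j * t j * ∏ i ∈ X.filter (fun i => j < i), (1 - f i)

lemma prod_one_sub_nonneg {f : ℕ → ℝ} {X : Finset ℕ} (hf : ∀ j ∈ X, f j ≤ 1) :
    0 ≤ ∏ i ∈ X, (1 - f i) :=
  Finset.prod_nonneg fun i hi => by linarith [hf i hi]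

lemma telescope (f : ℕ → ℝ) (X : Finset ℕ) :
    ∑ j ∈ X, f j * ∏ i ∈ X.filter (fun i => j < i), (1 - f i) = 1 - ∏ i ∈ X, (1 - f i) := by
  induction X using Finset.induction_on_max with
  | empty => simp
  | insert a s hlt ih =>
    have ha : a ∉ s := fun h => lt_irrefl a (hlt a h)
    rw [Finset.sum_insert ha, Finset.prod_insert ha]
    have h1 : (insert a s).filter (fun i => a < i) = ∅ := by
      rw [Finset.filter_insert, if_neg (lt_irrefl a)]
      exact Finset.filter_eq_empty_iff.mpr fun i hi => not_lt.mpr (hlt i hi).le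
    have h3 : ∀ j ∈ s, f j * ∏ i ∈ (insert a s).filter (fun i => j < i), (1 - f i)
        = (1 - f a) * (f j * ∏ i ∈ s.filter (fun i => j < i), (1 - f i)) := by
      intro j hj
      rw [Finset.filter_insert, if_pos (hlt j hj),
        Finset.prod_insert (fun h => ha (Finset.mem_filter.mp h).1)]
      ring
    rw [h1, Finset.sum_congr rfl h3, ← Finset.mul_sum, ih]
    simp; ring

lemma val_le {f t : ℕ → ℝ} {X : Finset ℕ} {c : ℝ} (hc : 0 ≤ c)
    (hf : ∀ j ∈ X, 0 ≤ f j ∧ f j ≤ 1) (ht : ∀ j ∈ X, t j ≤ c) : val f t X ≤ c := by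
  have step : val f t X ≤ ∑ j ∈ X, f j * c * ∏ i ∈ X.filter (fun i => j < i), (1 - f i) := by
    refine Finset.sum_le_sum fun j hj => ?_
    have hp : 0 ≤ ∏ i ∈ X.filter (fun i => j < i), (1 - f i) :=
      prod_one_sub_nonneg fun i hi => (hf i (Finset.mem_filter.mp hi).1).2
    have : f j * t j ≤ f j * c := mul_le_mul_of_nonneg_left (ht j hj) (hf j hj).1
    exact mul_le_mul_of_nonneg_right this hp
  have h2 : ∑ j ∈ X, f j * c * ∏ i ∈ X.filter (fun i => j < i), (1 - f i)
      = c * (1 - ∏ i ∈ X, (1 - f i)) := by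
    rw [← telescope f X, Finset.mul_sum]
    exact Finset.sum_congr rfl fun j _ => by ring
  have hp : 0 ≤ ∏ i ∈ X, (1 - f i) := prod_one_sub_nonneg fun i hi => (hf i hi).2
  calc val f t X ≤ c * (1 - ∏ i ∈ X, (1 - f i)) := by rw [← h2]; exact step
    _ ≤ c := by nlinarith

lemma val_insert {f t : ℕ → ℝ} {a : ℕ} {X : Finset ℕ} (ha : a ∉ X) :
    val f t (insert a X) = val f t X
      + f a * (t a - val f t (X.filter (· < a))) * ∏ i ∈ X.filter (fun i => a < i), (1 - f i) := by
  classical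
  unfold val
  rw [Finset.sum_insert ha]
  have h1 : (insert a X).filter (fun i => a < i) = X.filter (fun i => a < i) := by
    rw [Finset.filter_insert, if_neg (lt_irrefl a)]
  have h3 : ∀ j ∈ X, f j * t j * ∏ i ∈ (insert a X).filter (fun i => j < i), (1 - f i)
      = f j * t j * ∏ i ∈ X.filter (fun i => j < i), (1 - f i)
        - (if j < a then f a * (f j * t j * ∏ i ∈ X.filter (fun i => j < i), (1 - f i)) else 0) := by
    intro j hj
    rw [Finset.filter_insert]
    by_cases hja : j < a
    · rw [if_pos hja, if_pos hja,
        Finset.prod_insert (fun h => ha (Finset.mem_filter.mp h).1)]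
      ring
    · rw [if_neg hja, if_neg hja]; ring
  rw [Finset.sum_congr rfl h3, Finset.sum_sub_distrib, Finset.sum_ite, Finset.sum_const_zero,
    add_zero, h1]
  have key : ∑ j ∈ X.filter (fun j => j < a),
        f a * (f j * t j * ∏ i ∈ X.filter (fun i => j < i), (1 - f i))
      = f a * (∑ j ∈ X.filter (fun x => x < a), f j * t j *
          ∏ i ∈ (X.filter (fun x => x < a)).filter (fun i => j < i), (1 - f i))
        * ∏ i ∈ X.filter (fun i => a < i), (1 - f i) := by
    rw [mul_assoc, ← Finset.mul_sum, Finset.sum_mul]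
    congr 1
    refine Finset.sum_congr rfl fun j hj => ?_
    obtain ⟨hjX, hja⟩ := Finset.mem_filter.mp hj
    have hsplit : (X.filter (fun i => j < i)).filter (fun i => i < a) =
        (X.filter (fun x => x < a)).filter (fun i => j < i) := by
      ext i; simp only [Finset.mem_filter]; tauto
    have hsplit2 : (X.filter (fun i => j < i)).filter (fun i => ¬ i < a) =
        X.filter (fun i => a < i) := by
      ext i
      simp only [Finset.mem_filter, not_lt]
      constructor
      · rintro ⟨⟨hiX, hji⟩, hai⟩
        refine ⟨hiX, lt_of_le_of_ne hai ?_⟩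
        rintro rfl; exact ha hiX
      · rintro ⟨hiX, hai⟩
        exact ⟨⟨hiX, hja.trans hai⟩, hai.le⟩
    rw [← Finset.prod_filter_mul_prod_filter_not (X.filter (fun i => j < i))
      (fun i => i < a) (fun i => 1 - f i), hsplit, hsplit2]
    ring
  rw [key]
  ring

section
variable {f t : ℕ → ℝ} (hmono : Monotone t)
include hmono

lemma marg_key {a : ℕ} {X : Finset ℕ}
    (hf : ∀ j ∈ insert a X, 0 ≤ f j ∧ f j ≤ 1) (ht : ∀ j ∈ insert a X, 0 ≤ t j) :
    0 ≤ t a - val f t (X.filter (· < a)) := by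
  have hta : 0 ≤ t a := ht a (Finset.mem_insert_self a X)
  have hle : val f t (X.filter (· < a)) ≤ t a :=
    val_le hta (fun j hj => hf j (Finset.mem_insert_of_mem (Finset.mem_filter.mp hj).1))
      (fun j hj => hmono (Finset.mem_filter.mp hj).2.le)
  linarith

lemma marg_nonneg {a : ℕ} {X : Finset ℕ} (ha : a ∉ X)
    (hf : ∀ j ∈ insert a X, 0 ≤ f j ∧ f j ≤ 1) (ht : ∀ j ∈ insert a X, 0 ≤ t j) :
    val f t X ≤ val f t (insert a X) := by
  rw [val_insert ha]
  have h1 : 0 ≤ f a := (hf a (Finset.mem_insert_self a X)).1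
  have h2 := marg_key hmono hf ht
  have h3 : 0 ≤ ∏ i ∈ X.filter (fun i => a < i), (1 - f i) :=
    prod_one_sub_nonneg fun i hi =>
      (hf i (Finset.mem_insert_of_mem (Finset.mem_filter.mp hi).1)).2
  have := mul_nonneg (mul_nonneg h1 h2) h3
  linarith

lemma val_mono_union (D : Finset ℕ) : ∀ X : Finset ℕ,
    (∀ j ∈ X ∪ D, 0 ≤ f j ∧ f j ≤ 1) → (∀ j ∈ X ∪ D, 0 ≤ t j) →
    val f t X ≤ val f t (X ∪ D) := by
  classical
  induction D using Finset.induction_on with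
  | empty => intro X _ _; simp
  | @insert a D ha ih =>
    intro X hf ht
    have hXD : X ∪ insert a D = insert a (X ∪ D) := Finset.union_insert a X D
    rw [hXD]
    have hsub : X ∪ D ⊆ X ∪ insert a D := by
      intro i hi; rw [Finset.mem_union] at *
      rcases hi with h | h
      · exact Or.inl h
      · exact Or.inr (Finset.mem_insert_of_mem h)
    have hf' : ∀ j ∈ X ∪ D, 0 ≤ f j ∧ f j ≤ 1 := fun j hj => hf j (hsub hj)
    have ht' : ∀ j ∈ X ∪ D, 0 ≤ t j := fun j hj => ht j (hsub hj)
    by_cases haXD : a ∈ X ∪ D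
    · rw [Finset.insert_eq_self.mpr haXD]
      exact ih X hf' ht'
    · refine le_trans (ih X hf' ht') (marg_nonneg hmono haXD ?_ ?_) <;>
      · intro j hj
        rw [Finset.mem_insert] at hj
        rcases hj with rfl | hj
        · first
          | exact hf j (by simp)
          | exact ht j (by simp)
        · first
          | exact hf' j hj
          | exact ht' j hj

lemma val_mono {X Y : Finset ℕ} (hXY : X ⊆ Y)
    (hf : ∀ j ∈ Y, 0 ≤ f j ∧ f j ≤ 1) (ht : ∀ j ∈ Y, 0 ≤ t j) :
    val f t X ≤ val f t Y := by
  have h : X ∪ (Y \ X) = Y := Finset.union_sdiff_of_subset hXY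
  have := val_mono_union hmono (Y \ X) X (by rw [h]; exact hf) (by rw [h]; exact ht)
  rwa [h] at this

lemma marg_compare {a : ℕ} {S T : Finset ℕ} (hST : S ⊆ T) (haT : a ∉ T)
    (hf : ∀ j ∈ insert a T, 0 ≤ f j ∧ f j ≤ 1) (ht : ∀ j ∈ insert a T, 0 ≤ t j) :
    val f t (insert a T) - val f t T ≤ val f t (insert a S) - val f t S := by
  have haS : a ∉ S := fun h => haT (hST h)
  rw [val_insert haT, val_insert haS]
  have hfa : 0 ≤ f a := (hf a (Finset.mem_insert_self a T)).1
  have hfT : ∀ j ∈ T, 0 ≤ f j ∧ f j ≤ 1 := fun j hj => hf j (Finset.mem_insert_of_mem hj)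
  have htT : ∀ j ∈ T, 0 ≤ t j := fun j hj => ht j (Finset.mem_insert_of_mem hj)
  have hAT : 0 ≤ t a - val f t (T.filter (· < a)) := marg_key hmono hf ht
  have hAle : val f t (S.filter (· < a)) ≤ val f t (T.filter (· < a)) :=
    val_mono hmono (Finset.filter_subset_filter _ hST)
      (fun j hj => hfT j (Finset.mem_filter.mp hj).1)
      (fun j hj => htT j (Finset.mem_filter.mp hj).1)
  have hPsub : S.filter (fun i => a < i) ⊆ T.filter (fun i => a < i) :=
    Finset.filter_subset_filter _ hST
  have hPS0 : 0 ≤ ∏ i ∈ S.filter (fun i => a < i), (1 - f i) :=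
    prod_one_sub_nonneg fun i hi => (hfT i (hST (Finset.mem_filter.mp hi).1)).2
  have hPT0 : 0 ≤ ∏ i ∈ T.filter (fun i => a < i), (1 - f i) :=
    prod_one_sub_nonneg fun i hi => (hfT i (Finset.mem_filter.mp hi).1).2
  have hPle : ∏ i ∈ T.filter (fun i => a < i), (1 - f i)
      ≤ ∏ i ∈ S.filter (fun i => a < i), (1 - f i) := by
    rw [← Finset.prod_sdiff hPsub]
    have hd1 : ∏ i ∈ T.filter (fun i => a < i) \ S.filter (fun i => a < i), (1 - f i) ≤ 1 := by
      refine Finset.prod_le_one (fun i hi => ?_) (fun i hi => ?_)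
      · have := (hfT i (Finset.mem_filter.mp (Finset.mem_sdiff.mp hi).1).1).2; linarith
      · have := (hfT i (Finset.mem_filter.mp (Finset.mem_sdiff.mp hi).1).1).1; linarith
    nlinarith
  have h1 : (t a - val f t (T.filter (· < a))) * ∏ i ∈ T.filter (fun i => a < i), (1 - f i)
      ≤ (t a - val f t (S.filter (· < a))) * ∏ i ∈ S.filter (fun i => a < i), (1 - f i) :=
    mul_le_mul (by linarith) hPle hPT0 (by linarith)
  have h2 := mul_le_mul_of_nonneg_left h1 hfa
  rw [← mul_assoc, ← mul_assoc] at h2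
  linarith

lemma sub_lemma (D : Finset ℕ) : ∀ S T : Finset ℕ, S ⊆ T →
    (∀ j ∈ T ∪ D, 0 ≤ f j ∧ f j ≤ 1) → (∀ j ∈ T ∪ D, 0 ≤ t j) →
    val f t (T ∪ D) + val f t S ≤ val f t T + val f t (S ∪ D) := by
  classical
  induction D using Finset.induction_on with
  | empty => intro S T hST hf ht; simp only [Finset.union_empty]; linarith [
      val_mono hmono hST (by simpa using hf) (by simpa using ht)]
  | @insert a D ha ih =>
    intro S T hST hf ht
    rw [Finset.union_insert, Finset.union_insert]
    have hsub : T ∪ D ⊆ T ∪ insert a D := Finset.union_subset_union_right (Finset.subset_insert a D)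
    have heq : insert a (T ∪ D) = T ∪ insert a D := (Finset.union_insert a T D).symm
    have hfI : ∀ j ∈ insert a (T ∪ D), 0 ≤ f j ∧ f j ≤ 1 := by rw [heq]; exact hf
    have htI : ∀ j ∈ insert a (T ∪ D), 0 ≤ t j := by rw [heq]; exact ht
    have hf' : ∀ j ∈ T ∪ D, 0 ≤ f j ∧ f j ≤ 1 := fun j hj => hf j (hsub hj)
    have ht' : ∀ j ∈ T ∪ D, 0 ≤ t j := fun j hj => ht j (hsub hj)
    have hIH := ih S T hST hf' ht'
    have hSDsub : insert a (S ∪ D) ⊆ insert a (T ∪ D) :=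
      Finset.insert_subset_insert a (Finset.union_subset_union_left hST ..)
    have hfS : ∀ j ∈ insert a (S ∪ D), 0 ≤ f j ∧ f j ≤ 1 := fun j hj => hfI j (hSDsub hj)
    have htS : ∀ j ∈ insert a (S ∪ D), 0 ≤ t j := fun j hj => htI j (hSDsub hj)
    by_cases haTD : a ∈ T ∪ D
    · rw [Finset.insert_eq_self.mpr haTD]
      have : val f t (S ∪ D) ≤ val f t (insert a (S ∪ D)) :=
        val_mono hmono (Finset.subset_insert a _) hfS htS
      linarith
    · have hcmp := marg_compare hmono (Finset.union_subset_union_left hST ..) haTD hfI htI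
      linarith
end

/-- the valuation is a nondecreasing submodular set function. -/
theorem stmt_4 (m : ℕ) (f t : ℕ → ℝ)
    (hf : ∀ j ∈ Finset.Icc 1 m, 0 < f j ∧ f j ≤ 1)
    (ht : ∀ j ∈ Finset.Icc 1 m, 0 ≤ t j) (hmono : Monotone t) :
    (∀ X ⊆ Finset.Icc 1 m, ∀ Y ⊆ Finset.Icc 1 m,
        val f t (X ∪ Y) + val f t (X ∩ Y) ≤ val f t X + val f t Y) ∧
    (∀ X Y : Finset ℕ, X ⊆ Y → Y ⊆ Finset.Icc 1 m → val f t X ≤ val f t Y) := by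
  have hf' : ∀ j ∈ Finset.Icc 1 m, 0 ≤ f j ∧ f j ≤ 1 :=
    fun j hj => ⟨(hf j hj).1.le, (hf j hj).2⟩
  constructor
  · intro X hX Y hY
    have hD : X ∪ (Y \ X) = X ∪ Y := Finset.union_sdiff_self_eq_union
    have hS : (X ∩ Y) ∪ (Y \ X) = Y := by
      ext i
      simp only [Finset.mem_union, Finset.mem_inter, Finset.mem_sdiff]
      tauto
    have hXY : X ∪ Y ⊆ Finset.Icc 1 m := Finset.union_subset hX hY
    have := sub_lemma hmono (Y \ X) (X ∩ Y) X Finset.inter_subset_left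
      (fun j hj => hf' j (hXY (by rwa [hD] at hj)))
      (fun j hj => ht j (hXY (by rwa [hD] at hj)))
    rw [hD, hS] at this
    linarith
  · intro X Y hXY hY
    exact val_mono hmono hXY (fun j hj => hf' j (hY hj)) (fun j hj => ht j (hY hj))
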